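/- For all integers m ≥ 0 and 0 ≤ j ≤ m: every nonzero point of the lattice Λ(m, j) has Manhattan weight at least 2ʲ, and Λ(m, j) contains a point of Manhattan weight exactly 2ʲ; that is, the minimum Manhattan distance of Λ(m, j) equals 2ʲ. -/

import Mathlib

/-- `Hmat m` : the `2^m × 2^m` matrix defined by `H₀ = [1]` and
`H_{m+1} = [[Hₘ, Hₘ], [0, Hₘ]]` in block form. -/
def Hmat : (m : ℕ) → Matrix (Fin (2 ^ m)) (Fin (2 ^ m)) ℤ
  | 0 => Matrix.of fun _ _ => 1
  | m + 1 =>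
      Matrix.reindex
        (finSumFinEquiv.trans (finCongr (by rw [pow_succ, mul_two] :
          2 ^ m + 2 ^ m = 2 ^ (m + 1))))
        (finSumFinEquiv.trans (finCongr (by rw [pow_succ, mul_two] :
          2 ^ m + 2 ^ m = 2 ^ (m + 1))))
        (Matrix.fromBlocks (Hmat m) (Hmat m) 0 (Hmat m))

/-- `Smat m` : the `2^m × 2^m` Sylvester Hadamard matrix, `𝓗₀ = [1]`,
`𝓗_{m+1} = [[𝓗ₘ, 𝓗ₘ], [𝓗ₘ, −𝓗ₘ]]`. -/
def Smat : (m : ℕ) → Matrix (Fin (2 ^ m)) (Fin (2 ^ m)) ℤ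
  | 0 => Matrix.of fun _ _ => 1
  | m + 1 =>
      Matrix.reindex
        (finSumFinEquiv.trans (finCongr (by rw [pow_succ, mul_two] :
          2 ^ m + 2 ^ m = 2 ^ (m + 1))))
        (finSumFinEquiv.trans (finCongr (by rw [pow_succ, mul_two] :
          2 ^ m + 2 ^ m = 2 ^ (m + 1))))
        (Matrix.fromBlocks (Smat m) (Smat m) (Smat m) (-(Smat m)))

/-- Hamming weight of the `s`-th row of `Hmat m`. -/
def rowWeight (m : ℕ) (s : Fin (2 ^ m)) : ℕ :=
  (Finset.univ.filter (fun t => Hmat m s t ≠ 0)).card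

/-- `Gmat m j` : the matrix whose `s`-th row is the `s`-th row of `Hmat m`
multiplied by `2^(j − ℓ)` (truncated subtraction) where `2^ℓ` is the Hamming
weight of that row. -/
def Gmat (m j : ℕ) : Matrix (Fin (2 ^ m)) (Fin (2 ^ m)) ℤ :=
  Matrix.of fun s t => (2 : ℤ) ^ (j - Nat.log 2 (rowWeight m s)) * Hmat m s t

/-- The lattice generated by the rows of `G`. -/
def latticeOf {n : ℕ} (G : Matrix (Fin n) (Fin n) ℤ) : Set (Fin n → ℤ) :=
  { x | ∃ u : Fin n → ℤ, x = Matrix.vecMul u G }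

/-! ### Auxiliary lemmas -/

/-- The reindexing equivalence used in the recursive definitions. -/
def be (m : ℕ) : Fin (2 ^ m) ⊕ Fin (2 ^ m) ≃ Fin (2 ^ (m + 1)) :=
  finSumFinEquiv.trans (finCongr (by rw [pow_succ, mul_two] :
    2 ^ m + 2 ^ m = 2 ^ (m + 1)))

lemma Hmat_succ (m : ℕ) :
    Hmat (m + 1) = Matrix.reindex (be m) (be m)
      (Matrix.fromBlocks (Hmat m) (Hmat m) 0 (Hmat m)) := rfl

lemma Hmat_succ_apply (m : ℕ) (s t : Fin (2 ^ m) ⊕ Fin (2 ^ m)) :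
    Hmat (m + 1) (be m s) (be m t) =
      Matrix.fromBlocks (Hmat m) (Hmat m) 0 (Hmat m) s t := by
  rw [Hmat_succ, Matrix.reindex_apply, Matrix.submatrix_apply,
    Equiv.symm_apply_apply, Equiv.symm_apply_apply]

lemma rowWeight_card (m : ℕ) (s : Fin (2 ^ m)) :
    rowWeight m s = ∑ t, if Hmat m s t ≠ 0 then 1 else 0 := by
  rw [rowWeight, Finset.card_filter]

lemma rowWeight_inl (m : ℕ) (s : Fin (2 ^ m)) :
    rowWeight (m + 1) (be m (Sum.inl s)) = 2 * rowWeight m s := by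
  rw [rowWeight_card,
    ← Fintype.sum_equiv (be m)
      (fun t => if Hmat (m + 1) (be m (Sum.inl s)) (be m t) ≠ 0 then 1 else 0)
      (fun t => if Hmat (m + 1) (be m (Sum.inl s)) t ≠ 0 then 1 else 0)
      (fun t => rfl)]
  simp only [Hmat_succ_apply]
  rw [Fintype.sum_sum_type]
  simp only [Matrix.fromBlocks_apply₁₁, Matrix.fromBlocks_apply₁₂]
  rw [rowWeight_card, two_mul]
  congr 1 <;> refine Finset.sum_congr rfl fun x _ => ?_ <;> split_ifs <;> simp_all

lemma rowWeight_inr (m : ℕ) (s : Fin (2 ^ m)) :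
    rowWeight (m + 1) (be m (Sum.inr s)) = rowWeight m s := by
  rw [rowWeight_card,
    ← Fintype.sum_equiv (be m)
      (fun t => if Hmat (m + 1) (be m (Sum.inr s)) (be m t) ≠ 0 then 1 else 0)
      (fun t => if Hmat (m + 1) (be m (Sum.inr s)) t ≠ 0 then 1 else 0)
      (fun t => rfl)]
  simp only [Hmat_succ_apply]
  rw [Fintype.sum_sum_type]
  simp only [Matrix.fromBlocks_apply₂₁, Matrix.fromBlocks_apply₂₂]
  rw [rowWeight_card]
  simp
  exact Finset.sum_congr rfl fun x _ => by split_ifs <;> simp_all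

lemma rowWeight_pos : ∀ m, ∀ s : Fin (2 ^ m), 0 < rowWeight m s := by
  intro m
  induction m with
  | zero =>
    intro s
    rw [rowWeight]
    refine Finset.card_pos.2 ⟨⟨0, by norm_num⟩, ?_⟩
    simp only [Finset.mem_filter, Finset.mem_univ, true_and]
    rw [show Hmat 0 s ⟨0, by norm_num⟩ = 1 from rfl]
    exact one_ne_zero
  | succ m ih =>
    intro t
    obtain ⟨y, rfl⟩ := (be m).surjective t
    cases y with
    | inl s => rw [rowWeight_inl]; have := ih s; omega
    | inr s => rw [rowWeight_inr]; exact ih s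

lemma Gmat_succ (m j : ℕ) :
    Gmat (m + 1) j = Matrix.reindex (be m) (be m)
      (Matrix.fromBlocks (Gmat m (j - 1)) (Gmat m (j - 1)) 0 (Gmat m j)) := by
  ext i i'
  obtain ⟨t, rfl⟩ := (be m).surjective i
  obtain ⟨t', rfl⟩ := (be m).surjective i'
  rw [Matrix.reindex_apply, Matrix.submatrix_apply,
    Equiv.symm_apply_apply, Equiv.symm_apply_apply]
  have hexp : ∀ s : Fin (2 ^ m),
      j - Nat.log 2 (rowWeight (m + 1) (be m (Sum.inl s)))
        = (j - 1) - Nat.log 2 (rowWeight m s) := by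
    intro s
    rw [rowWeight_inl, mul_comm, Nat.log_mul_base (by norm_num) (rowWeight_pos m s).ne']
    omega
  cases t with
  | inl s =>
    cases t' with
    | inl s' =>
      show _ = Gmat m (j - 1) s s'
      rw [Gmat, Gmat, Matrix.of_apply, Matrix.of_apply, hexp s]
      rw [show Hmat (m + 1) (be m (Sum.inl s)) (be m (Sum.inl s')) = Hmat m s s' from
        Hmat_succ_apply m (Sum.inl s) (Sum.inl s')]
    | inr s' =>
      show _ = Gmat m (j - 1) s s'
      rw [Gmat, Gmat, Matrix.of_apply, Matrix.of_apply, hexp s]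
      rw [show Hmat (m + 1) (be m (Sum.inl s)) (be m (Sum.inr s')) = Hmat m s s' from
        Hmat_succ_apply m (Sum.inl s) (Sum.inr s')]
  | inr s =>
    cases t' with
    | inl s' =>
      show Gmat (m + 1) j _ _ = (0 : Matrix _ _ ℤ) s s'
      rw [Gmat, Matrix.of_apply]
      rw [show Hmat (m + 1) (be m (Sum.inr s)) (be m (Sum.inl s')) = (0 : Matrix _ _ ℤ) s s' from
        Hmat_succ_apply m (Sum.inr s) (Sum.inl s')]
      simp
    | inr s' =>
      show _ = Gmat m j s s'
      rw [Gmat, Gmat, Matrix.of_apply, Matrix.of_apply, rowWeight_inr]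
      rw [show Hmat (m + 1) (be m (Sum.inr s)) (be m (Sum.inr s')) = Hmat m s s' from
        Hmat_succ_apply m (Sum.inr s) (Sum.inr s')]

lemma vecMul_Gmat_succ (m j : ℕ) (u : Fin (2 ^ (m + 1)) → ℤ)
    (t : Fin (2 ^ m) ⊕ Fin (2 ^ m)) :
    Matrix.vecMul u (Gmat (m + 1) j) (be m t) =
      Sum.elim (Matrix.vecMul (u ∘ be m ∘ Sum.inl) (Gmat m (j - 1)))
        (fun s => Matrix.vecMul (u ∘ be m ∘ Sum.inl) (Gmat m (j - 1)) s
          + Matrix.vecMul (u ∘ be m ∘ Sum.inr) (Gmat m j) s) t := by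
  rw [Gmat_succ, Matrix.reindex_apply, Matrix.submatrix_vecMul_equiv]
  have h1 : u ∘ (be m).symm.symm = u ∘ (be m) := by
    ext k; simp
  rw [Function.comp_apply, Equiv.symm_apply_apply, h1,
    show u ∘ (be m) = Sum.elim (u ∘ be m ∘ Sum.inl) (u ∘ be m ∘ Sum.inr) from
      (Sum.elim_comp_inl_inr (u ∘ be m)).symm,
    Matrix.vecMul_fromBlocks]
  cases t with
  | inl s => simp [Matrix.vecMul_zero, Sum.elim_comp_inl, Sum.elim_comp_inr]
  | inr s => simp [Sum.elim_comp_inl, Sum.elim_comp_inr]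

lemma lattice_succ (m j : ℕ) (x : Fin (2 ^ (m + 1)) → ℤ) :
    x ∈ latticeOf (Gmat (m + 1) j) ↔
      ∃ a ∈ latticeOf (Gmat m (j - 1)), ∃ b ∈ latticeOf (Gmat m j),
        (∀ s, x (be m (Sum.inl s)) = a s) ∧ (∀ s, x (be m (Sum.inr s)) = a s + b s) := by
  constructor
  · rintro ⟨u, rfl⟩
    refine ⟨Matrix.vecMul (u ∘ be m ∘ Sum.inl) (Gmat m (j - 1)), ⟨_, rfl⟩,
      Matrix.vecMul (u ∘ be m ∘ Sum.inr) (Gmat m j), ⟨_, rfl⟩, fun s => ?_, fun s => ?_⟩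
    · exact vecMul_Gmat_succ m j u (Sum.inl s)
    · exact vecMul_Gmat_succ m j u (Sum.inr s)
  · rintro ⟨a, ⟨u₁, rfl⟩, b, ⟨u₂, rfl⟩, h1, h2⟩
    refine ⟨Sum.elim u₁ u₂ ∘ (be m).symm, funext fun i => ?_⟩
    obtain ⟨t, rfl⟩ := (be m).surjective i
    have hu1 : (Sum.elim u₁ u₂ ∘ (be m).symm) ∘ be m ∘ Sum.inl = u₁ := by
      ext k; simp
    have hu2 : (Sum.elim u₁ u₂ ∘ (be m).symm) ∘ be m ∘ Sum.inr = u₂ := by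
      ext k; simp
    rw [vecMul_Gmat_succ m j (Sum.elim u₁ u₂ ∘ (be m).symm) t, hu1, hu2]
    cases t with
    | inl s => exact h1 s
    | inr s => exact h2 s

lemma sum_abs_be (m : ℕ) (x : Fin (2 ^ (m + 1)) → ℤ) :
    ∑ i, |x i| = (∑ s, |x (be m (Sum.inl s))|) + ∑ s, |x (be m (Sum.inr s))| := by
  rw [← Fintype.sum_equiv (be m) (fun t => |x (be m t)|) (fun i => |x i|) (fun t => rfl),
    Fintype.sum_sum_type]

lemma zero_mem_lattice {n : ℕ} (G : Matrix (Fin n) (Fin n) ℤ) :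
    (0 : Fin n → ℤ) ∈ latticeOf G :=
  ⟨0, (Matrix.zero_vecMul G).symm⟩

lemma lower_bound : ∀ m j, ∀ x ∈ latticeOf (Gmat m j), x ≠ 0 →
    (2 : ℤ) ^ j ≤ ∑ i, |x i| := by
  intro m
  induction m with
  | zero =>
    rintro j x ⟨u, rfl⟩ hx
    obtain ⟨i₀, hi₀⟩ := Function.ne_iff.1 hx
    have hval : ∀ i, Matrix.vecMul u (Gmat 0 j) i = (∑ k, u k) * 2 ^ j := by
      intro i
      rw [Matrix.vecMul, dotProduct, Finset.sum_mul]
      refine Finset.sum_congr rfl fun k _ => ?_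
      have h1 : Hmat 0 k i = 1 := rfl
      have h2 : rowWeight 0 k = 1 := by
        rw [rowWeight]
        have : Finset.univ.filter (fun t => Hmat 0 k t ≠ 0) = Finset.univ := by
          refine Finset.filter_true_of_mem fun t _ => ?_
          show Hmat 0 k t ≠ 0
          have : Hmat 0 k t = 1 := rfl
          simp [this]
        rw [this]
        simp
      rw [Gmat, Matrix.of_apply, h1, h2]
      simp [mul_comm]
    have hc : (∑ k, u k) ≠ 0 := by
      intro h
      exact hi₀ (by rw [hval i₀, h, zero_mul]; rfl)
    calc (2 : ℤ) ^ j = 1 * 2 ^ j := (one_mul _).symm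
      _ ≤ |(∑ k, u k)| * 2 ^ j := by
          have : (1 : ℤ) ≤ |∑ k, u k| := Int.one_le_abs (by simpa using hc)
          exact mul_le_mul_of_nonneg_right this (by positivity)
      _ = |(∑ k, u k) * 2 ^ j| := by
          rw [abs_mul, abs_of_nonneg (by positivity : (0:ℤ) ≤ 2 ^ j)]
      _ = |Matrix.vecMul u (Gmat 0 j) i₀| := by rw [hval i₀]
      _ ≤ ∑ i, |Matrix.vecMul u (Gmat 0 j) i| :=
          Finset.single_le_sum (f := fun i => |Matrix.vecMul u (Gmat 0 j) i|)
            (fun i _ => abs_nonneg _) (Finset.mem_univ i₀)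
  | succ m ih =>
    intro j x hx hx0
    rw [lattice_succ] at hx
    obtain ⟨a, ha, b, hb, h1, h2⟩ := hx
    rw [sum_abs_be]
    simp only [h1, h2]
    by_cases hb0 : b = 0
    · have ha0 : a ≠ 0 := by
        intro h0
        apply hx0
        funext i
        obtain ⟨t, rfl⟩ := (be m).surjective i
        cases t with
        | inl s => rw [h1 s, h0]; rfl
        | inr s => rw [h2 s, h0, hb0]; rfl
      have key := ih (j - 1) a ha ha0
      have hsum : ∀ s, |a s + b s| = |a s| := by
        intro s; rw [hb0]; simp
      simp only [hsum]
      calc (2 : ℤ) ^ j ≤ 2 ^ ((j - 1) + 1) := by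
            apply pow_le_pow_right₀ (by norm_num); omega
        _ = 2 ^ (j - 1) + 2 ^ (j - 1) := by ring
        _ ≤ (∑ s, |a s|) + ∑ s, |a s| := add_le_add key key
    · have key := ih j b hb hb0
      refine le_trans key ?_
      rw [← Finset.sum_add_distrib]
      refine Finset.sum_le_sum fun s _ => ?_
      calc |b s| = |(a s + b s) - a s| := by ring_nf
        _ ≤ |a s + b s| + |a s| := abs_sub _ _
        _ = |a s| + |a s + b s| := add_comm _ _

lemma exists_point : ∀ m j, j ≤ m →
    ∃ x ∈ latticeOf (Gmat m j), (∑ i, |x i|) = (2 : ℤ) ^ j := by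
  intro m
  induction m with
  | zero =>
    intro j hj
    interval_cases j
    refine ⟨Matrix.vecMul (fun _ => 1) (Gmat 0 0), ⟨_, rfl⟩, ?_⟩
    have hval : ∀ i, Matrix.vecMul (fun _ => (1:ℤ)) (Gmat 0 0) i = ∑ k : Fin (2^0), Gmat 0 0 k i := by
      intro i
      rw [Matrix.vecMul, dotProduct]
      simp
    have hG : ∀ k i : Fin (2 ^ 0), Gmat 0 0 k i = 1 := by
      intro k i
      have h1 : Hmat 0 k i = 1 := rfl
      have h2 : rowWeight 0 k = 1 := by
        rw [rowWeight]
        have : Finset.univ.filter (fun t => Hmat 0 k t ≠ 0) = Finset.univ := by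
          refine Finset.filter_true_of_mem fun t _ => ?_
          show Hmat 0 k t ≠ 0
          have : Hmat 0 k t = 1 := rfl
          simp [this]
        rw [this]; simp
      rw [Gmat, Matrix.of_apply, h1, h2]
      simp
    have hcard : (Finset.univ : Finset (Fin (2 ^ 0))).card = 1 := by simp
    calc ∑ i, |Matrix.vecMul (fun _ => (1:ℤ)) (Gmat 0 0) i|
        = ∑ i : Fin (2 ^ 0), (1 : ℤ) := by
          refine Finset.sum_congr rfl fun i _ => ?_
          rw [hval i]
          have : ∑ k : Fin (2 ^ 0), Gmat 0 0 k i = ∑ k : Fin (2 ^ 0), (1 : ℤ) :=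
            Finset.sum_congr rfl fun k _ => hG k i
          rw [this, Finset.sum_const, hcard]
          simp
      _ = (2 : ℤ) ^ 0 := by rw [Finset.sum_const, hcard]; simp
  | succ m ih =>
    intro j hj
    by_cases h : j ≤ m
    · obtain ⟨b, hb, hbw⟩ := ih j h
      set x : Fin (2 ^ (m + 1)) → ℤ := Sum.elim (0 : Fin (2 ^ m) → ℤ) b ∘ (be m).symm
        with hxdef
      have e1 : ∀ s, x (be m (Sum.inl s)) = 0 := fun s => by simp [hxdef]
      have e2 : ∀ s, x (be m (Sum.inr s)) = b s := fun s => by simp [hxdef]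
      refine ⟨x, ?_, ?_⟩
      · rw [lattice_succ]
        exact ⟨0, zero_mem_lattice _, b, hb,
          fun s => by simp [e1 s], fun s => by simp [e2 s]⟩
      · rw [sum_abs_be]
        simp only [e1, e2]
        simp [hbw]
    · have hjm : j = m + 1 := by omega
      obtain ⟨a, ha, haw⟩ := ih m le_rfl
      have hm : j - 1 = m := by omega
      set x : Fin (2 ^ (m + 1)) → ℤ := Sum.elim a a ∘ (be m).symm with hxdef
      have e1 : ∀ s, x (be m (Sum.inl s)) = a s := fun s => by simp [hxdef]
      have e2 : ∀ s, x (be m (Sum.inr s)) = a s := fun s => by simp [hxdef]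
      refine ⟨x, ?_, ?_⟩
      · rw [lattice_succ]
        exact ⟨a, by rw [hm]; exact ha, 0, zero_mem_lattice _,
          fun s => by simp [e1 s], fun s => by simp [e2 s]⟩
      · rw [sum_abs_be]
        simp only [e1, e2, haw, hjm]
        ring

/-- The minimum Manhattan distance of the lattice `Λ(m, j)` generated by the rows
of `G(m, j)` equals `2^j`: every nonzero lattice point has Manhattan weight at
least `2^j`, and some lattice point has Manhattan weight exactly `2^j`. -/
theorem min_manhattan_distance_Gmj (m j : ℕ) (hj : j ≤ m) :
    (∀ x ∈ latticeOf (Gmat m j), x ≠ 0 → (2 : ℤ) ^ j ≤ ∑ i, |x i|) ∧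
    (∃ x ∈ latticeOf (Gmat m j), (∑ i, |x i|) = (2 : ℤ) ^ j) := by
  exact ⟨lower_bound m j, exists_point m j hj⟩
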